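/- Let D be a Dedekind domain that is not a field, O an order in D, and f the conductor of O in D. If h ∈ Cl(D) is a class containing some nonzero prime ideal of D coprime to f, then there exists a prime ideal p of O coprime to f (hence invertible as a fractional ideal of O) such that the class of p·D in Cl(D) equals h. In particular, the number of classes of Cl(D) containing a nonzero prime ideal coprime to f is at most the number of classes of Cl(O) containing an invertible prime ideal coprime to f. -/

import Mathlib

open scoped nonZeroDivisors

/-- The conductor `f = {a ∈ D | a·D ⊆ O}` of a subring `O` of `D`, as an ideal of `D`. -/
def conductorIdeal {D : Type*} [CommRing D] (O : Subring D) : Ideal D where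
  carrier := {a | ∀ d : D, a * d ∈ O}
  add_mem' := by
    intro a b ha hb d
    simpa [add_mul] using O.add_mem (ha d) (hb d)
  zero_mem' := by
    intro d
    simpa using O.zero_mem
  smul_mem' := by
    intro c a ha d
    have h := ha (c * d)
    have e : c • a * d = a * (c * d) := by rw [smul_eq_mul]; ring
    rw [e]; exact h

/-- The conductor of the subring `O` of `D`, viewed as an ideal of `O`
(the conductor is contained in `O`). -/
def conductorIdealO {D : Type*} [CommRing D] (O : Subring D) : Ideal O :=
  (conductorIdeal O).comap O.subtype

theorem mem_conductorIdeal' {D : Type*} [CommRing D] {O : Subring D} {a : D} :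
    a ∈ conductorIdeal O ↔ ∀ d : D, a * d ∈ O := Iff.rfl

theorem conductor_subset_self {D : Type*} [CommRing D] {O : Subring D} {a : D}
    (h : a ∈ conductorIdeal O) : a ∈ O := by
  simpa using (mem_conductorIdeal'.mp h) 1

theorem isFractionRing_of_order {D : Type*} [CommRing D] [IsDomain D] (O : Subring D)
    (hsurj : ∀ x : FractionRing D, ∃ a b : O, b ≠ 0 ∧
      x = algebraMap D (FractionRing D) a / algebraMap D (FractionRing D) b) :
    IsFractionRing ↥O (FractionRing D) := by
  set K := FractionRing D
  have hinj : Function.Injective (algebraMap ↥O K) := by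
    have h : (algebraMap ↥O K) = (algebraMap D K).comp O.subtype := rfl
    rw [h]
    exact (IsFractionRing.injective D K).comp O.subtype_injective
  constructor
  constructor
  · rintro ⟨y, hy⟩
    rw [isUnit_iff_ne_zero]
    intro h0
    have : y = 0 := hinj (by rw [map_zero]; exact h0)
    exact (mem_nonZeroDivisors_iff_ne_zero.mp hy) this
  · intro z
    obtain ⟨a, b, hb, hz⟩ := hsurj z
    have hbD : (b : D) ≠ 0 := fun h => hb (Subtype.ext h)
    have hbK : algebraMap D K (b : D) ≠ 0 := by
      intro h
      exact hbD (IsFractionRing.injective D K (by rw [map_zero]; exact h))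
    refine ⟨⟨a, ⟨b, mem_nonZeroDivisors_of_ne_zero hb⟩⟩, ?_⟩
    show z * algebraMap D K (b : D) = algebraMap D K (a : D)
    rw [hz, div_mul_cancel₀ _ hbK]
  · intro x y h
    exact ⟨1, by rw [hinj h]⟩

set_option maxHeartbeats 1000000 in
set_option synthInstance.maxHeartbeats 400000 in
open FractionalIdeal in
theorem order_key {D : Type*} [CommRing D] [IsDedekindDomain D] (O : Subring D)
    [IsFractionRing ↥O (FractionRing D)]
    (P : Ideal D) (hP : P.IsPrime) (hP0 : P ≠ ⊥) (hPf : P ⊔ conductorIdeal O = ⊤) :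
    ∃ p : Ideal ↥O, p.IsPrime ∧ p ⊔ conductorIdealO O = ⊤ ∧
      IsUnit ((p : Ideal ↥O) : FractionalIdeal (↥O)⁰ (FractionRing ↥O)) ∧
      p.map O.subtype = P := by
  classical
  set K := FractionRing D with hK
  set f : Ideal D := conductorIdeal O with hf
  have h1 : (1 : D) ∈ P ⊔ f := by rw [hPf]; exact Submodule.mem_top
  obtain ⟨x, hxP, y, hyf, hxy⟩ := Submodule.mem_sup.mp h1
  have hyO : y ∈ O := conductor_subset_self hyf
  have hxO : x ∈ O := by
    have hx1 : x = 1 - y := by rw [← hxy]; ring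
    rw [hx1]; exact O.sub_mem O.one_mem hyO
  set p : Ideal ↥O := P.comap O.subtype with hp
  haveI := hP
  have hpprime : p.IsPrime := Ideal.IsPrime.comap _
  have hxp : (⟨x, hxO⟩ : ↥O) ∈ p := by
    rw [hp, Ideal.mem_comap]; exact hxP
  have hcop : p ⊔ conductorIdealO O = ⊤ := by
    rw [Ideal.eq_top_iff_one]
    refine Submodule.mem_sup.mpr ⟨⟨x, hxO⟩, hxp, ⟨y, hyO⟩, ?_, ?_⟩
    · rw [conductorIdealO, Ideal.mem_comap]; exact hyf
    · exact Subtype.ext hxy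
  have hmap : p.map O.subtype = P := by
    apply le_antisymm (Ideal.map_le_iff_le_comap.mpr le_rfl)
    intro z hz
    have hxz : x * z ∈ p.map O.subtype :=
      Ideal.mul_mem_right z _ (Ideal.mem_map_of_mem O.subtype hxp)
    have hyzO : y * z ∈ O := (mem_conductorIdeal'.mp hyf) z
    have hyzp : (⟨y * z, hyzO⟩ : ↥O) ∈ p := by
      rw [hp, Ideal.mem_comap]
      exact Ideal.mul_mem_left _ y hz
    have hyz : y * z ∈ p.map O.subtype := Ideal.mem_map_of_mem O.subtype hyzp
    have hzz : z = x * z + y * z := by rw [← add_mul, hxy, one_mul]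
    rw [hzz]; exact Ideal.add_mem _ hxz hyz
  -- invertibility
  have hfne : f ≠ ⊥ := by
    intro h
    rw [h, sup_bot_eq] at hPf
    exact hP.ne_top hPf
  obtain ⟨c, hcf, hc0⟩ := Submodule.ne_bot_iff _ |>.mp hfne
  set PD : FractionalIdeal D⁰ K := (P : FractionalIdeal D⁰ K) with hPD
  have hPD0 : PD ≠ 0 := coeIdeal_ne_zero.mpr hP0
  set N : FractionalIdeal D⁰ K := PD⁻¹ * (f : FractionalIdeal D⁰ K) with hN
  have hPN : PD * N = (f : FractionalIdeal D⁰ K) := by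
    rw [hN, ← mul_assoc, mul_inv_cancel₀ hPD0, one_mul]
  obtain ⟨d, hd, hdN⟩ := N.isFractional
  have hdne : d ≠ 0 := mem_nonZeroDivisors_iff_ne_zero.mp hd
  have hcd : c * d ∈ O := (mem_conductorIdeal'.mp hcf) d
  have hBfrac : IsFractional (↥O)⁰ ((N : Submodule D K).restrictScalars ↥O) := by
    refine ⟨⟨c * d, hcd⟩, ?_, ?_⟩
    · exact mem_nonZeroDivisors_of_ne_zero
        (fun h => (mul_ne_zero hc0 hdne) (congrArg Subtype.val h))
    intro b hb
    obtain ⟨e, he⟩ := hdN b hb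
    refine ⟨⟨c * e, (mem_conductorIdeal'.mp hcf) e⟩, ?_⟩
    show algebraMap D K (c * e) = (⟨c * d, hcd⟩ : ↥O) • b
    have hsm : (⟨c * d, hcd⟩ : ↥O) • b = algebraMap D K (c * d) * b := by
      rw [Algebra.smul_def]; rfl
    rw [hsm, _root_.map_mul, _root_.map_mul, he, Algebra.smul_def]
    ring
  set bN : FractionalIdeal (↥O)⁰ K := ⟨(N : Submodule D K).restrictScalars ↥O, hBfrac⟩ with hbN
  have hbNcoe : (bN : Submodule ↥O K) = (N : Submodule D K).restrictScalars ↥O := rfl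
  set b : FractionalIdeal (↥O)⁰ K := bN + 1 with hb
  -- the submodule product
  set S : Submodule ↥O K :=
    ((p : FractionalIdeal (↥O)⁰ K) : Submodule ↥O K) * (bN : Submodule ↥O K) with hS
  have hScoe : S = (((p : FractionalIdeal (↥O)⁰ K) * bN : FractionalIdeal (↥O)⁰ K) : Submodule ↥O K) := by
    rw [hS, coe_mul]
  -- inner claim
  have inner : ∀ π ∈ Ideal.map O.subtype p, ∀ n ∈ (N : Submodule D K),
      algebraMap D K π * n ∈ S := by
    intro π hπ
    rw [Ideal.map] at hπ
    induction hπ using Submodule.span_induction with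
    | mem w hw =>
      obtain ⟨xi, hxi, rfl⟩ := hw
      intro n hn
      have h1 : algebraMap ↥O K xi ∈ ((p : FractionalIdeal (↥O)⁰ K) : Submodule ↥O K) :=
        mem_coe.mpr (mem_coeIdeal _ |>.mpr ⟨xi, hxi, rfl⟩)
      have h2 : n ∈ (bN : Submodule ↥O K) := hn
      exact Submodule.mul_mem_mul h1 h2
    | zero =>
      intro n hn
      rw [_root_.map_zero, zero_mul]; exact Submodule.zero_mem _
    | add u v hu hv ihu ihv =>
      intro n hn
      rw [_root_.map_add, add_mul]
      exact Submodule.add_mem _ (ihu n hn) (ihv n hn)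
    | smul a w hw ihw =>
      intro n hn
      have : algebraMap D K (a • w) * n = algebraMap D K w * (a • n) := by
        rw [smul_eq_mul, _root_.map_mul, Algebra.smul_def]; ring
      rw [this]
      exact ihw (a • n) (Submodule.smul_mem _ a hn)
  have claim : ∀ w ∈ f, algebraMap D K w ∈ S := by
    intro w hwf
    have hw1 : algebraMap D K w ∈ ((f : FractionalIdeal D⁰ K) : Submodule D K) :=
      mem_coe.mpr (mem_coeIdeal _ |>.mpr ⟨w, hwf, rfl⟩)
    rw [← hPN, coe_mul] at hw1
    refine Submodule.mul_induction_on hw1 ?_ ?_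
    · intro m hm n hn
      obtain ⟨π, hπ, rfl⟩ := mem_coeIdeal _ |>.mp (mem_coe.mp hm)
      rw [← hmap] at hπ
      exact inner π hπ n hn
    · intro u v hu hv
      exact Submodule.add_mem _ hu hv
  have hbcoe : (b : Submodule ↥O K) =
      (bN : Submodule ↥O K) ⊔ ((1 : FractionalIdeal (↥O)⁰ K) : Submodule ↥O K) := by
    rw [hb, coe_add]; exact (Submodule.add_eq_sup _ _)
  have hone_b : (1 : K) ∈ b := by
    apply mem_coe.mp
    rw [hbcoe]
    exact Submodule.mem_sup_right (mem_coe.mpr (one_mem_one _))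
  have hone : (1 : K) ∈ (p : FractionalIdeal (↥O)⁰ K) * b := by
    obtain ⟨u, hu, v, hv, huv⟩ := Submodule.mem_sup.mp
      (by rw [hcop]; exact Submodule.mem_top : (1 : ↥O) ∈ p ⊔ conductorIdealO O)
    have heq : (1 : K) = algebraMap ↥O K u + algebraMap ↥O K v := by
      rw [← _root_.map_add, huv, _root_.map_one]
    have t1 : algebraMap ↥O K u ∈ (p : FractionalIdeal (↥O)⁰ K) * b := by
      have := mul_mem_mul (mem_coeIdeal _ |>.mpr ⟨u, hu, rfl⟩) hone_b
      rwa [mul_one] at this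
    have hble : (bN : Submodule ↥O K) ≤ (b : Submodule ↥O K) := by
      rw [hbcoe]; exact le_sup_left
    have hS_le : S ≤ (((p : FractionalIdeal (↥O)⁰ K) * b : FractionalIdeal (↥O)⁰ K) :
        Submodule ↥O K) := by
      rw [coe_mul, hS]
      exact mul_le_mul' le_rfl hble
    have hvf : (v : D) ∈ f := hv
    have t2 : algebraMap ↥O K v ∈ (p : FractionalIdeal (↥O)⁰ K) * b := by
      apply mem_coe.mp
      apply hS_le
      exact claim (v : D) hvf
    apply mem_coe.mp
    rw [heq]
    exact Submodule.add_mem _ (mem_coe.mpr t1) (mem_coe.mpr t2)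
  have hmul : (p : FractionalIdeal (↥O)⁰ K) * b = 1 := by
    apply le_antisymm
    · rw [hb, mul_add, mul_one]
      rw [← sup_eq_add]
      apply sup_le ?_ coeIdeal_le_one
      apply mul_le.mpr
      intro i hi j hj
      obtain ⟨xi, hxi, rfl⟩ := mem_coeIdeal _ |>.mp hi
      have hiP : algebraMap ↥O K xi ∈ PD := by
        apply mem_coeIdeal _ |>.mpr
        exact ⟨(xi : D), hxi, rfl⟩
      have hjN : j ∈ N := mem_coe.mp hj
      have hij := mul_mem_mul hiP hjN
      rw [hPN] at hij
      obtain ⟨w, hwf, hw⟩ := mem_coeIdeal _ |>.mp hij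
      exact mem_one_iff _ |>.mpr ⟨⟨w, conductor_subset_self hwf⟩, hw⟩
    · rw [← spanSingleton_one]
      exact spanSingleton_le_iff_mem.mpr hone
  refine ⟨p, hpprime, hcop, ?_, hmap⟩
  have hu : IsUnit ((p : Ideal ↥O) : FractionalIdeal (↥O)⁰ K) := IsUnit.of_mul_eq_one b hmul
  have hu2 := hu.map (FractionalIdeal.canonicalEquiv (↥O)⁰ K (FractionRing ↥O))
  rwa [FractionalIdeal.canonicalEquiv_coeIdeal] at hu2

/-- `O` is an order in the Dedekind domain `D`: a subring such that the fraction field of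
`D` is also a fraction field of `O` (every element is a quotient of two elements of `O`)
and such that `D` is a finitely generated `O`-module. -/
def Subring.IsOrder {D : Type*} [CommRing D] [IsDomain D] (O : Subring D) : Prop :=
  (∀ x : FractionRing D, ∃ a b : O,
      b ≠ 0 ∧ x = algebraMap D (FractionRing D) a / algebraMap D (FractionRing D) b) ∧
    Module.Finite O D

set_option maxHeartbeats 1000000 in
set_option synthInstance.maxHeartbeats 400000 in
/-- **Lemma 4.1(1).** If a class `h ∈ Cl(D)` contains a nonzero prime ideal of `D` coprime
to the conductor `f` of an order `O ⊆ D`, then there is a prime ideal `p` of `O` coprime to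
`f` (hence invertible as a fractional ideal of `O`) whose extension `p·D` has class `h`.
In particular, the number of classes of `Cl(D)` containing a nonzero prime ideal coprime to
`f` is at most the number of classes of `Cl(O)` containing an invertible prime ideal coprime
to `f`. -/
theorem class_surjectivity_primes_coprime_conductor {D : Type*} [CommRing D]
    [IsDedekindDomain D] (hD : ¬ IsField D) (O : Subring D) (hO : O.IsOrder) :
    (∀ h : ClassGroup D,
      (∃ P : (Ideal D)⁰, (P : Ideal D).IsPrime ∧ (P : Ideal D) ⊔ conductorIdeal O = ⊤ ∧
        ClassGroup.mk0 P = h) →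
      (∃ p : Ideal O, p.IsPrime ∧ p ⊔ conductorIdealO O = ⊤ ∧
        IsUnit ((p : Ideal O) : FractionalIdeal (↥O)⁰ (FractionRing ↥O)) ∧
        ∃ hm : p.map O.subtype ∈ (Ideal D)⁰,
          ClassGroup.mk0 ⟨p.map O.subtype, hm⟩ = h)) ∧
    Cardinal.mk {h : ClassGroup D |
        ∃ P : (Ideal D)⁰, (P : Ideal D).IsPrime ∧ (P : Ideal D) ⊔ conductorIdeal O = ⊤ ∧
          ClassGroup.mk0 P = h} ≤
      Cardinal.mk {g : ClassGroup O |
        ∃ p : Ideal O, p.IsPrime ∧ p ⊔ conductorIdealO O = ⊤ ∧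
          ∃ hp : IsUnit ((p : Ideal O) : FractionalIdeal (↥O)⁰ (FractionRing ↥O)),
            ClassGroup.mk (FractionRing ↥O) hp.unit = g} := by
  haveI : IsFractionRing ↥O (FractionRing D) := isFractionRing_of_order O hO.1
  have main : ∀ h : ClassGroup D,
      (∃ P : (Ideal D)⁰, (P : Ideal D).IsPrime ∧ (P : Ideal D) ⊔ conductorIdeal O = ⊤ ∧
        ClassGroup.mk0 P = h) →
      (∃ p : Ideal O, p.IsPrime ∧ p ⊔ conductorIdealO O = ⊤ ∧
        IsUnit ((p : Ideal O) : FractionalIdeal (↥O)⁰ (FractionRing ↥O)) ∧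
        ∃ hm : p.map O.subtype ∈ (Ideal D)⁰,
          ClassGroup.mk0 ⟨p.map O.subtype, hm⟩ = h) := by
    rintro h ⟨P, hPp, hPf, rfl⟩
    have hP0 : (P : Ideal D) ≠ ⊥ := by
      have h2 := P.2
      rw [mem_nonZeroDivisors_iff_ne_zero] at h2
      simpa using h2
    obtain ⟨pp, h1, h2, h3, h4⟩ := order_key O P hPp hP0 hPf
    have hm : pp.map O.subtype ∈ (Ideal D)⁰ := by rw [h4]; exact P.2
    exact ⟨pp, h1, h2, h3, hm, by congr 1; exact Subtype.ext h4⟩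
  refine ⟨main, ?_⟩
  have main' : ∀ h : {h : ClassGroup D | ∃ P : (Ideal D)⁰, (P : Ideal D).IsPrime ∧
      (P : Ideal D) ⊔ conductorIdeal O = ⊤ ∧ ClassGroup.mk0 P = h},
      ∃ pp : Ideal ↥O, (pp ⊔ conductorIdealO O = ⊤ ∧ pp.IsPrime) ∧
        ∃ hp : IsUnit ((pp : Ideal ↥O) : FractionalIdeal (↥O)⁰ (FractionRing ↥O)),
          ∃ hm : pp.map O.subtype ∈ (Ideal D)⁰,
            ClassGroup.mk0 ⟨pp.map O.subtype, hm⟩ = (h : ClassGroup D) := by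
    rintro ⟨h, hh⟩
    obtain ⟨pp, h1, h2, h3, hm, h5⟩ := main h hh
    exact ⟨pp, ⟨h2, h1⟩, h3, hm, h5⟩
  choose pp hpc hp hm h5 using main'
  apply Cardinal.mk_le_of_injective
    (f := fun h => ⟨ClassGroup.mk (FractionRing ↥O) (hp h).unit, pp h, (hpc h).2, (hpc h).1, hp h, rfl⟩)
  intro a b hab
  have hmk : ClassGroup.mk (FractionRing ↥O) (hp a).unit = ClassGroup.mk (FractionRing ↥O) (hp b).unit := congrArg Subtype.val hab
  rw [ClassGroup.mk_eq_mk_of_coe_ideal (hp a).unit_spec (hp b).unit_spec] at hmk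
  obtain ⟨x, y, hx, hy, hxy⟩ := hmk
  apply Subtype.ext
  rw [← h5 a, ← h5 b]
  apply ClassGroup.mk0_eq_mk0_iff.mpr
  refine ⟨(x : D), (y : D), fun h0 => hx (Subtype.ext h0), fun h0 => hy (Subtype.ext h0), ?_⟩
  have hmapped := congrArg (Ideal.map O.subtype) hxy
  rwa [Ideal.map_mul, Ideal.map_mul, Ideal.map_span, Ideal.map_span,
    Set.image_singleton, Set.image_singleton] at hmapped
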